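/- (Key deterministic bound; step in the proof of Theorem 2.) In the empirical/population notation, let γ* ∈ L²(P_Z) and let h assign to suitable functions g: 𝒵 → ℝ a function h(·, g): 𝒵 → ℝ such that γ*·g − h(·, g) is P_Z-integrable; define M(g) := E_n[γ*·g − h(·, g)] − E[γ*·g − h(·, g)]. Fix constants η_Q ∈ (0, 1], η_M > 0, r > 0, B > 0 and assume that every f ∈ F satisfies: (i) if E f² ≥ r² then E_n f² ≥ η_Q·E f²; (ii) if E f² ≥ r² then |M(f)| ≤ η_M·E f²; (iii) if E f² ≤ r² then |M(f)| ≤ η_M·r². Let g ∈ L²(P_Z) satisfy g/2 ∈ F, h(z, g) = 2·h(z, g/2) for all z ∈ 𝒵, E_n g² ≤ B, E_n h(·, g) ≥ 0, and E_n h(·, g) + M(g) ≤ 0. Then E_n h(·, g) ≤ max(η_M·B/(2·η_Q), 2·η_M·r²). -/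

import Mathlib

open MeasureTheory

/-- The empirical mean `E_n u = (1/n)·Σ_{i=1}^n u(z_i)` over fixed design points. -/
noncomputable def empMean {𝒵 : Type*} {n : ℕ} (z : Fin n → 𝒵) (u : 𝒵 → ℝ) : ℝ :=
  (1 / (n : ℝ)) * ∑ i, u (z i)

/-- key deterministic bound; step in the proof of Theorem 2.
Under the empirical-process regularity conditions (i)–(iii) on the class `F`, any `g` with
`g/2 ∈ F`, `h(·,g) = 2·h(·,g/2)`, `E_n g² ≤ B`, `E_n h(·,g) ≥ 0` and `E_n h(·,g) + M(g) ≤ 0`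
satisfies `E_n h(·,g) ≤ max(η_M·B/(2·η_Q), 2·η_M·r²)`. -/
theorem deterministic_bound_for_h
    {𝒵 : Type*} [MeasurableSpace 𝒵] (PZ : Measure 𝒵) [IsProbabilityMeasure PZ]
    {n : ℕ} (hn : 0 < n) (z : Fin n → 𝒵)
    (F : Set (𝒵 → ℝ)) (hFne : F.Nonempty) (hFL2 : ∀ f ∈ F, MemLp f 2 PZ)
    (γstar : 𝒵 → ℝ) (hγL2 : MemLp γstar 2 PZ)
    (h : (𝒵 → ℝ) → 𝒵 → ℝ)
    (hintF : ∀ f ∈ F, Integrable (fun ζ => γstar ζ * f ζ - h f ζ) PZ)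
    (M : (𝒵 → ℝ) → ℝ)
    (hM : ∀ u, M u = empMean z (fun ζ => γstar ζ * u ζ - h u ζ) -
        ∫ ζ, (γstar ζ * u ζ - h u ζ) ∂PZ)
    (ηQ ηM r B : ℝ)
    (hηQ0 : 0 < ηQ) (hηQ1 : ηQ ≤ 1) (hηM : 0 < ηM) (hr : 0 < r) (hB : 0 < B)
    (hi : ∀ f ∈ F, r ^ 2 ≤ ∫ ζ, f ζ ^ 2 ∂PZ →
      ηQ * ∫ ζ, f ζ ^ 2 ∂PZ ≤ empMean z (fun ζ => f ζ ^ 2))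
    (hii : ∀ f ∈ F, r ^ 2 ≤ ∫ ζ, f ζ ^ 2 ∂PZ → |M f| ≤ ηM * ∫ ζ, f ζ ^ 2 ∂PZ)
    (hiii : ∀ f ∈ F, (∫ ζ, f ζ ^ 2 ∂PZ) ≤ r ^ 2 → |M f| ≤ ηM * r ^ 2)
    (g : 𝒵 → ℝ) (hgL2 : MemLp g 2 PZ)
    (hghalf : (fun ζ => g ζ / 2) ∈ F)
    (hgh : ∀ ζ, h g ζ = 2 * h (fun ξ => g ξ / 2) ζ)
    (hgint : Integrable (fun ζ => γstar ζ * g ζ - h g ζ) PZ)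
    (hgB : empMean z (fun ζ => g ζ ^ 2) ≤ B)
    (hgpos : 0 ≤ empMean z (h g))
    (hgneg : empMean z (h g) + M g ≤ 0) :
    empMean z (h g) ≤ max (ηM * B / (2 * ηQ)) (2 * ηM * r ^ 2) := by
  set f : 𝒵 → ℝ := fun ζ => g ζ / 2 with hf
  have hsmul : ∀ (c : ℝ) (u : 𝒵 → ℝ),
      empMean z (fun ζ => c * u ζ) = c * empMean z u := by
    intro c u
    have hs : ∑ i, c * u (z i) = c * ∑ i, u (z i) := (Finset.mul_sum _ _ _).symm
    unfold empMean
    rw [hs]; ring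
  have hpt : ∀ ζ, γstar ζ * g ζ - h g ζ = 2 * (γstar ζ * f ζ - h f ζ) := by
    intro ζ; rw [hgh ζ]; simp only [hf]; ring
  have hMg : M g = 2 * M f := by
    rw [hM g, hM f]
    have h1 : empMean z (fun ζ => γstar ζ * g ζ - h g ζ)
        = 2 * empMean z (fun ζ => γstar ζ * f ζ - h f ζ) := by
      rw [show (fun ζ => γstar ζ * g ζ - h g ζ)
          = (fun ζ => 2 * (γstar ζ * f ζ - h f ζ)) from funext hpt, hsmul]
    have h2 : (∫ ζ, (γstar ζ * g ζ - h g ζ) ∂PZ)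
        = 2 * ∫ ζ, (γstar ζ * f ζ - h f ζ) ∂PZ := by
      rw [show (fun ζ => γstar ζ * g ζ - h g ζ)
          = (fun ζ => 2 * (γstar ζ * f ζ - h f ζ)) from funext hpt]
      simpa [smul_eq_mul] using integral_smul (2 : ℝ) (fun ζ => γstar ζ * f ζ - h f ζ)
    rw [h1, h2]; ring
  have hkey : empMean z (h g) ≤ 2 * |M f| := by
    have : empMean z (h g) ≤ - M g := by linarith
    have habs : - M g ≤ |M g| := neg_le_abs _
    have : empMean z (h g) ≤ |M g| := this.trans habs
    rwa [hMg, abs_mul, abs_two] at this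
  by_cases hle : (∫ ζ, f ζ ^ 2 ∂PZ) ≤ r ^ 2
  · have := hiii f hghalf hle
    have : empMean z (h g) ≤ 2 * (ηM * r ^ 2) := by
      have := mul_le_mul_of_nonneg_left this (by norm_num : (0:ℝ) ≤ 2)
      linarith [hkey]
    calc empMean z (h g) ≤ 2 * ηM * r ^ 2 := by linarith
      _ ≤ _ := le_max_right _ _
  · push_neg at hle
    have hge : r ^ 2 ≤ ∫ ζ, f ζ ^ 2 ∂PZ := le_of_lt hle
    have hMf := hii f hghalf hge
    have hQ := hi f hghalf hge
    have hEnf : empMean z (fun ζ => f ζ ^ 2) = (1/4) * empMean z (fun ζ => g ζ ^ 2) := by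
      rw [show (fun ζ => f ζ ^ 2) = (fun ζ => (1/4) * g ζ ^ 2) by
        funext ζ; simp only [hf]; ring, hsmul]
    have hIf : (∫ ζ, f ζ ^ 2 ∂PZ) ≤ B / (4 * ηQ) := by
      rw [hEnf] at hQ
      rw [le_div_iff₀ (by positivity)]
      nlinarith [hgB]
    have : empMean z (h g) ≤ 2 * (ηM * (B / (4 * ηQ))) := by
      have h3 : |M f| ≤ ηM * (B / (4 * ηQ)) :=
        hMf.trans (by exact mul_le_mul_of_nonneg_left hIf hηM.le)
      linarith [hkey]
    calc empMean z (h g) ≤ 2 * (ηM * (B / (4 * ηQ))) := this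
      _ = ηM * B / (2 * ηQ) := by field_simp; ring
      _ ≤ _ := le_max_left _ _
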